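/- (Theorem 1.7, analytic quasi-transversality implies generalized Flow-Box.) Let U ⊆ ℝⁿ be open, V : U → ℝⁿ a real-analytic vector field, f₁, …, f_k : U → ℝ real-analytic, and X = {q ∈ U : f₁(q) = ⋯ = f_k(q) = 0}. For a differentiable function f write V·f for the function q ↦ (fderiv f q)(V(q)). Assume: (i) f₁, …, f_k locally generate the ideal of X: for every q ∈ X, every open W ⊆ U containing q and every real-analytic g : W → ℝ vanishing on X ∩ W, there exist an open neighborhood W' ⊆ W of q and real-analytic a₁,…,a_k : W' → ℝ with g = Σᵢ aᵢ·fᵢ on W'; (ii) the triple (U, V, X) is geometrically quasi-transverse: for every q ∈ X with V(q) ≠ 0 there exist an open neighborhood W ⊆ U of q and a real-analytic f : W → ℝ such that X ∩ W ⊆ f⁻¹(0) and (fderiv f q)(V(q)) ≠ 0; (iii) analytic quasi-transversality: there exist real-analytic functions a_{ij}, b_{ij} : U → ℝ (1 ≤ i, j ≤ k) with V·(V·fᵢ) = Σⱼ a_{ij}·fⱼ + Σⱼ b_{ij}·(V·fⱼ) on U for every i. Then (U, V, X) satisfies the generalized Flow-Box property: for every compact K ⊆ X there exists δ > 0 such that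 for every p ∈ K with V(p) ≠ 0 and every integral curve γ : I → U of V with 0 ∈ I ⊆ (−δ, δ) and γ(0) = p, one has γ(t) ∉ X for all t ∈ I with t ≠ 0. -/

import Mathlib

open Set Metric


/-- Escape-time lemma: a curve with speed bounded by `CV` while within distance `R` of `p`
stays within distance `R` of `p` for time `< R / CV`. -/
lemma flowbox_escape {n : ℕ} (γ : ℝ → (Fin n → ℝ)) (Wv : ℝ → (Fin n → ℝ))
    (p : Fin n → ℝ) (τ R CV : ℝ) (hτ : 0 < τ) (hR : 0 < R) (hCV : 0 ≤ CV)
    (hγ0 : γ 0 = p)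
    (hd : ∀ t ∈ Icc 0 τ, HasDerivWithinAt γ (Wv t) (Icc 0 τ) t)
    (hb : ∀ t ∈ Icc 0 τ, dist (γ t) p ≤ R → ‖Wv t‖ ≤ CV)
    (hsmall : CV * τ < R) :
    ∀ t ∈ Icc 0 τ, dist (γ t) p ≤ R := by
  have hcont : ContinuousOn γ (Icc 0 τ) := fun t ht => (hd t ht).continuousWithinAt
  have hdistc : ContinuousOn (fun t => dist (γ t) p) (Icc 0 τ) :=
    (continuous_id.dist continuous_const).comp_continuousOn hcont
  by_contra hcon
  push_neg at hcon
  obtain ⟨t1, ht1, ht1R⟩ := hcon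
  set B : Set ℝ := Icc 0 τ ∩ (fun t => dist (γ t) p) ⁻¹' (Ici R) with hBdef
  have hBclosed : IsClosed B :=
    hdistc.preimage_isClosed_of_isClosed isClosed_Icc isClosed_Ici
  have hBne : B.Nonempty := ⟨t1, ht1, le_of_lt ht1R⟩
  have hBbdd : BddBelow B := ⟨0, fun x hx => hx.1.1⟩
  set T := sInf B with hTdef
  have hTB : T ∈ B := hBclosed.csInf_mem hBne hBbdd
  have hTmem : T ∈ Icc 0 τ := hTB.1
  have hTR : R ≤ dist (γ T) p := hTB.2
  have hT0 : 0 < T := by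
    rcases eq_or_lt_of_le hTmem.1 with h | h
    · exfalso
      rw [← h, hγ0, dist_self] at hTR
      linarith
    · exact h
  -- before time T, the curve is within distance R, hence speed ≤ CV
  have hpre : ∀ s ∈ Ico 0 T, dist (γ s) p ≤ R := by
    intro s hs
    have : s ∉ B := notMem_of_lt_csInf hs.2 hBbdd
    by_contra hcon2
    exact this ⟨⟨hs.1, le_trans hs.2.le hTmem.2⟩, le_of_not_ge hcon2⟩
  -- mean value estimate up to any t < T
  have hmv : ∀ t ∈ Ico 0 T, dist (γ t) p ≤ CV * t := by
    intro t ht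
    have htIcc : Icc 0 t ⊆ Icc 0 τ :=
      Icc_subset_Icc le_rfl (le_trans ht.2.le hTmem.2)
    have hder : ∀ s ∈ Icc 0 t, HasDerivWithinAt γ (Wv s) (Icc 0 t) s :=
      fun s hs => (hd s (htIcc hs)).mono htIcc
    have hbnd : ∀ s ∈ Icc 0 t, ‖Wv s‖ ≤ CV := by
      intro s hs
      refine hb s (htIcc hs) (hpre s ⟨hs.1, lt_of_le_of_lt hs.2 ht.2⟩)
    have := Convex.norm_image_sub_le_of_norm_hasDerivWithin_le hder hbnd
      (convex_Icc 0 t) (left_mem_Icc.2 ht.1) (right_mem_Icc.2 ht.1)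
    rw [hγ0] at this
    rw [dist_eq_norm]
    simpa [Real.norm_eq_abs, abs_of_nonneg ht.1] using this
  -- pass to the limit at T
  have hS'closed : IsClosed (Icc 0 τ ∩ (fun t => dist (γ t) p - CV * t) ⁻¹' (Iic 0)) := by
    refine ContinuousOn.preimage_isClosed_of_isClosed ?_ isClosed_Icc isClosed_Iic
    exact hdistc.sub (continuousOn_const.mul continuousOn_id)
  have hIcoS' : Ico 0 T ⊆ Icc 0 τ ∩ (fun t => dist (γ t) p - CV * t) ⁻¹' (Iic 0) := by
    intro t ht
    refine ⟨⟨ht.1, le_trans ht.2.le hTmem.2⟩, ?_⟩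
    simp only [mem_preimage, mem_Iic, sub_nonpos]
    exact hmv t ht
  have hTS' : T ∈ Icc 0 τ ∩ (fun t => dist (γ t) p - CV * t) ⁻¹' (Iic 0) := by
    have h1 : T ∈ closure (Ico 0 T) := by
      rw [closure_Ico hT0.ne]
      exact right_mem_Icc.2 hT0.le
    have h2 := closure_mono hIcoS' h1
    rwa [hS'closed.closure_eq] at h2
  have : dist (γ T) p ≤ CV * T := by
    have := hTS'.2
    simp only [mem_preimage, mem_Iic, sub_nonpos] at this
    exact this
  have : dist (γ T) p ≤ CV * τ :=
    le_trans this (mul_le_mul_of_nonneg_left hTmem.2 hCV)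
  linarith

/-- Core quantitative estimate: if `P' = Q`, `Q' = Θ` with `‖Θ‖ ≤ C(‖P‖+‖Q‖)`,
`P 0 = P τ = 0` and `τ` is small with respect to `C`, then `Q 0 = 0`. -/
lemma flowbox_core {k : ℕ} (P Q Θ : ℝ → (Fin k → ℝ)) (τ C : ℝ)
    (hτ : 0 < τ) (hC : 0 ≤ C)
    (hP : ∀ t ∈ Icc 0 τ, HasDerivWithinAt P (Q t) (Icc 0 τ) t)
    (hQ : ∀ t ∈ Icc 0 τ, HasDerivWithinAt Q (Θ t) (Icc 0 τ) t)
    (hΘ : ∀ t ∈ Icc 0 τ, ‖Θ t‖ ≤ C * (‖P t‖ + ‖Q t‖))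
    (hP0 : P 0 = 0) (hPτ : P τ = 0)
    (hsmall : 2 * C * (τ + 1) * τ < 1) :
    Q 0 = 0 := by
  have h0mem : (0 : ℝ) ∈ Icc 0 τ := left_mem_Icc.2 hτ.le
  have hτmem : τ ∈ Icc 0 τ := right_mem_Icc.2 hτ.le
  have hQcont : ContinuousOn Q (Icc 0 τ) := fun t ht => (hQ t ht).continuousWithinAt
  have hPcont : ContinuousOn P (Icc 0 τ) := fun t ht => (hP t ht).continuousWithinAt
  obtain ⟨tQ, htQ, hmaxQ'⟩ := isCompact_Icc.exists_isMaxOn ⟨0, h0mem⟩ hQcont.norm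
  obtain ⟨tP, htP, hmaxP'⟩ := isCompact_Icc.exists_isMaxOn ⟨0, h0mem⟩ hPcont.norm
  have hmaxQ : ∀ t ∈ Icc 0 τ, ‖Q t‖ ≤ ‖Q tQ‖ := fun t ht => hmaxQ' ht
  have hmaxP : ∀ t ∈ Icc 0 τ, ‖P t‖ ≤ ‖P tP‖ := fun t ht => hmaxP' ht
  set NQ := ‖Q tQ‖ with hNQdef
  set NP := ‖P tP‖ with hNPdef
  have hNQ0 : 0 ≤ NQ := norm_nonneg _
  have hNP0 : 0 ≤ NP := norm_nonneg _
  -- ‖P t‖ ≤ NQ * t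
  have hPb : ∀ t ∈ Icc 0 τ, ‖P t‖ ≤ NQ * t := by
    intro t ht
    have := Convex.norm_image_sub_le_of_norm_hasDerivWithin_le hP hmaxQ
      (convex_Icc 0 τ) h0mem ht
    rw [hP0, sub_zero] at this
    simpa [Real.norm_eq_abs, abs_of_nonneg ht.1] using this
  have hNPle : NP ≤ NQ * τ :=
    le_trans (hPb tP htP) (mul_le_mul_of_nonneg_left htP.2 hNQ0)
  -- ‖Θ t‖ ≤ C * (NP + NQ)
  have hΘb : ∀ t ∈ Icc 0 τ, ‖Θ t‖ ≤ C * (NP + NQ) := by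
    intro t ht
    refine le_trans (hΘ t ht) (mul_le_mul_of_nonneg_left ?_ hC)
    exact add_le_add (hmaxP t ht) (hmaxQ t ht)
  -- ‖Q t - Q 0‖ ≤ C * (NP + NQ) * t
  have hQb : ∀ t ∈ Icc 0 τ, ‖Q t - Q 0‖ ≤ C * (NP + NQ) * t := by
    intro t ht
    have := Convex.norm_image_sub_le_of_norm_hasDerivWithin_le hQ hΘb
      (convex_Icc 0 τ) h0mem ht
    simpa [Real.norm_eq_abs, abs_of_nonneg ht.1] using this
  have hq0le : ‖Q 0‖ ≤ NQ := hmaxQ 0 h0mem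
  have hNQle : NQ ≤ ‖Q 0‖ + C * (NP + NQ) * τ := by
    have h1 : ‖Q tQ‖ ≤ ‖Q 0‖ + ‖Q tQ - Q 0‖ := by
      have := norm_sub_norm_le (Q tQ) (Q 0)
      linarith [norm_sub_norm_le (Q tQ) (Q 0)]
    have h2 : ‖Q tQ - Q 0‖ ≤ C * (NP + NQ) * τ :=
      le_trans (hQb tQ htQ) (mul_le_mul_of_nonneg_left htQ.2
        (mul_nonneg hC (add_nonneg hNP0 hNQ0)))
    linarith
  -- the auxiliary function R t = P t - t • Q 0
  set Rf : ℝ → (Fin k → ℝ) := fun t => P t - t • Q 0 with hRdef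
  have hRd : ∀ t ∈ Icc 0 τ, HasDerivWithinAt Rf (Q t - Q 0) (Icc 0 τ) t := by
    intro t ht
    have h1 : HasDerivWithinAt (fun s : ℝ => s • Q 0) ((1 : ℝ) • Q 0) (Icc 0 τ) t :=
      ((hasDerivAt_id t).smul_const (Q 0)).hasDerivWithinAt
    rw [one_smul] at h1
    exact (hP t ht).sub h1
  have hRb : ∀ t ∈ Icc 0 τ, ‖Q t - Q 0‖ ≤ C * (NP + NQ) * τ := by
    intro t ht
    refine le_trans (hQb t ht) ?_
    exact mul_le_mul_of_nonneg_left ht.2 (mul_nonneg hC (add_nonneg hNP0 hNQ0))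
  have hMV := Convex.norm_image_sub_le_of_norm_hasDerivWithin_le hRd hRb
    (convex_Icc 0 τ) h0mem hτmem
  have hR0 : Rf 0 = 0 := by simp [hRdef, hP0]
  have hRτ : ‖Rf τ‖ = τ * ‖Q 0‖ := by
    simp [hRdef, hPτ, norm_smul, Real.norm_eq_abs, abs_of_nonneg hτ.le]
  rw [hR0, sub_zero] at hMV
  rw [hRτ] at hMV
  have hτn : ‖τ - (0:ℝ)‖ = τ := by
    simp [Real.norm_eq_abs, abs_of_nonneg hτ.le]
  rw [hτn] at hMV
  -- now conclude ‖Q 0‖ = 0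
  have e1 : NP + NQ ≤ (τ + 1) * NQ := by nlinarith
  have e2 : C * (NP + NQ) * τ ≤ C * ((τ + 1) * NQ) * τ :=
    mul_le_mul_of_nonneg_right (mul_le_mul_of_nonneg_left e1 hC) hτ.le
  have e3 : NQ ≤ ‖Q 0‖ + C * ((τ + 1) * NQ) * τ := by linarith
  have e4 : τ * ‖Q 0‖ ≤ (C * ((τ + 1) * NQ) * τ) * τ :=
    le_trans hMV (mul_le_mul_of_nonneg_right e2 hτ.le)
  have e5 : ‖Q 0‖ ≤ C * ((τ + 1) * NQ) * τ := by nlinarith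
  have hfac : (0:ℝ) ≤ 1 - 2 * C * (τ + 1) * τ := by linarith
  have e6 : NQ ≤ 0 := by nlinarith [mul_nonneg hfac hNQ0]
  have hqzero : ‖Q 0‖ ≤ 0 := le_trans hq0le e6
  have : ‖Q 0‖ = 0 := le_antisymm hqzero (norm_nonneg _)
  exact norm_eq_zero.1 this

/-- **Theorem 1.7.** If the triple `(U, V, X)` is analytically quasi-transverse
(geometrically quasi-transverse and `∂²(𝓘_X) ⊆ ∂(𝓘_X) + 𝓘_X`), then it satisfies the
generalized Flow-Box property. Here `X` is the common zero set of `f₁, …, f_k`, which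
locally generate the ideal of `X`. -/
theorem analytic_quasi_transverse_flow_box
    (n k : ℕ)
    (U : Set (Fin n → ℝ)) (hU : IsOpen U)
    (V : (Fin n → ℝ) → (Fin n → ℝ)) (hV : AnalyticOnNhd ℝ V U)
    (f : Fin k → (Fin n → ℝ) → ℝ) (hf : ∀ i, AnalyticOnNhd ℝ (f i) U)
    (X : Set (Fin n → ℝ)) (hX : X = {q ∈ U | ∀ i, f i q = 0})
    -- (i) `f₁, …, f_k` locally generate the ideal of `X`
    (hgen : ∀ q ∈ X, ∀ W : Set (Fin n → ℝ), IsOpen W → q ∈ W → W ⊆ U →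
      ∀ g : (Fin n → ℝ) → ℝ, AnalyticOnNhd ℝ g W → (∀ x ∈ X ∩ W, g x = 0) →
      ∃ (W' : Set (Fin n → ℝ)) (a : Fin k → (Fin n → ℝ) → ℝ),
        IsOpen W' ∧ q ∈ W' ∧ W' ⊆ W ∧ (∀ i, AnalyticOnNhd ℝ (a i) W') ∧
        (∀ x ∈ W', g x = ∑ i, a i x * f i x))
    -- (ii) geometric quasi-transversality
    (hgqt : ∀ q ∈ X, V q ≠ 0 → ∃ (W : Set (Fin n → ℝ)) (g : (Fin n → ℝ) → ℝ),
      IsOpen W ∧ q ∈ W ∧ W ⊆ U ∧ AnalyticOnNhd ℝ g W ∧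
      (X ∩ W ⊆ g ⁻¹' {0}) ∧ fderiv ℝ g q (V q) ≠ 0)
    -- (iii) analytic quasi-transversality: V·(V·fᵢ) = Σⱼ aᵢⱼ fⱼ + Σⱼ bᵢⱼ (V·fⱼ)
    (haqt : ∃ a b : Fin k → Fin k → (Fin n → ℝ) → ℝ,
      (∀ i j, AnalyticOnNhd ℝ (a i j) U) ∧ (∀ i j, AnalyticOnNhd ℝ (b i j) U) ∧
      ∀ i, ∀ q ∈ U,
        fderiv ℝ (fun x => fderiv ℝ (f i) x (V x)) q (V q) =
          (∑ j, a i j q * f j q) + ∑ j, b i j q * fderiv ℝ (f j) q (V q)) :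
    ∀ K ⊆ X, IsCompact K →
      ∃ δ > (0 : ℝ), ∀ p ∈ K, V p ≠ 0 → ∀ (I : Set ℝ) (γ : ℝ → (Fin n → ℝ)),
        I.OrdConnected → (0 : ℝ) ∈ I → I ⊆ Set.Ioo (-δ) δ →
        (∀ t ∈ I, γ t ∈ U) →
        (∀ t ∈ I, HasDerivWithinAt γ (V (γ t)) I t) →
        γ 0 = p →
        ∀ t ∈ I, t ≠ 0 → γ t ∉ X := by
  obtain ⟨a, b, haan, hban, hab⟩ := haqt
  intro K hKX hK
  have hXU : X ⊆ U := by rw [hX]; exact fun q hq => hq.1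
  have hKU : K ⊆ U := hKX.trans hXU
  obtain ⟨r, hr, hrU⟩ := hK.exists_thickening_subset_open hU hKU
  set L : Set (Fin n → ℝ) := Metric.cthickening (r/2) K with hLdef
  have hLU : L ⊆ U := (cthickening_subset_thickening' hr (by linarith) K).trans hrU
  have hLc : IsCompact L := hK.cthickening
  -- bound for V on L
  obtain ⟨CV₀, hCV₀⟩ := hLc.exists_bound_of_continuousOn ((hV.continuousOn).mono hLU)
  set CV : ℝ := max CV₀ 0 with hCVdef
  have hCV : ∀ x ∈ L, ‖V x‖ ≤ CV := fun x hx => (hCV₀ x hx).trans (le_max_left _ _)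
  have hCV0 : (0:ℝ) ≤ CV := le_max_right _ _
  -- bound for the coefficients on L
  set A : (Fin n → ℝ) → ℝ := fun x => ∑ i, ∑ j, (|a i j x| + |b i j x|) with hAdef
  have hAcont : ContinuousOn A L := by
    apply continuousOn_finset_sum
    intro i _
    apply continuousOn_finset_sum
    intro j _
    exact (((haan i j).continuousOn.mono hLU).abs).add (((hban i j).continuousOn.mono hLU).abs)
  obtain ⟨C₁, hC₁⟩ := hLc.exists_bound_of_continuousOn hAcont
  set C₀ : ℝ := max C₁ 0 with hC₀def
  have hC₀0 : (0:ℝ) ≤ C₀ := le_max_right _ _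
  have hAC₀ : ∀ x ∈ L, A x ≤ C₀ := by
    intro x hx
    calc A x ≤ |A x| := le_abs_self _
    _ = ‖A x‖ := rfl
    _ ≤ C₁ := hC₁ x hx
    _ ≤ C₀ := le_max_left _ _
  have haL : ∀ x ∈ L, ∀ i, (∑ j, |a i j x|) ≤ C₀ := by
    intro x hx i
    calc (∑ j, |a i j x|) ≤ ∑ j, (|a i j x| + |b i j x|) :=
          Finset.sum_le_sum fun j _ => le_add_of_nonneg_right (abs_nonneg _)
    _ ≤ A x := Finset.single_le_sum
        (f := fun i' => ∑ j, (|a i' j x| + |b i' j x|))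
        (fun i' _ => Finset.sum_nonneg fun j _ => by positivity) (Finset.mem_univ i)
    _ ≤ C₀ := hAC₀ x hx
  have hbL : ∀ x ∈ L, ∀ i, (∑ j, |b i j x|) ≤ C₀ := by
    intro x hx i
    calc (∑ j, |b i j x|) ≤ ∑ j, (|a i j x| + |b i j x|) :=
          Finset.sum_le_sum fun j _ => le_add_of_nonneg_left (abs_nonneg _)
    _ ≤ A x := Finset.single_le_sum
        (f := fun i' => ∑ j, (|a i' j x| + |b i' j x|))
        (fun i' _ => Finset.sum_nonneg fun j _ => by positivity) (Finset.mem_univ i)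
    _ ≤ C₀ := hAC₀ x hx
  -- differentiability of the derived functions
  have hgdiff : ∀ i, ∀ x ∈ U, DifferentiableAt ℝ (fun y => fderiv ℝ (f i) y (V y)) x := by
    intro i x hx
    have h1 : ContDiffAt ℝ 2 (f i) x := (hf i x hx).contDiffAt
    have h2 : ContDiffAt ℝ 1 (fderiv ℝ (f i)) x := h1.fderiv_right (by norm_num)
    have h3 : ContDiffAt ℝ 1 V x := (hV x hx).contDiffAt
    exact (h2.clm_apply h3).differentiableAt (by norm_num)
  -- choice of δ
  set δ : ℝ := min ((r/2)/(CV+1)) (min 1 (1/(4*C₀+2))) with hδdef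
  have hδ0 : 0 < δ := by
    refine lt_min (by positivity) (lt_min one_pos (by positivity))
  have hδ1 : δ ≤ (r/2)/(CV+1) := min_le_left _ _
  have hδ2 : δ ≤ 1 := le_trans (min_le_right _ _) (min_le_left _ _)
  have hδ3 : δ ≤ 1/(4*C₀+2) := le_trans (min_le_right _ _) (min_le_right _ _)
  refine ⟨δ, hδ0, ?_⟩
  intro p hpK hVp I γ hIoc hI0 hIδ hγU hγd hγ0 t₀ ht₀I ht₀ne hXt₀
  have hpX : p ∈ X := hKX hpK
  have hpU : p ∈ U := hXU hpX
  have hfp : ∀ i, f i p = 0 := by rw [hX] at hpX; exact hpX.2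
  have hft₀ : ∀ i, f i (γ t₀) = 0 := by rw [hX] at hXt₀; exact hXt₀.2
  -- sign normalization
  set ε : ℝ := if 0 < t₀ then 1 else -1 with hεdef
  have hεcase : ε = 1 ∧ 0 < t₀ ∨ ε = -1 ∧ t₀ < 0 := by
    by_cases h : 0 < t₀
    · exact Or.inl ⟨if_pos h, h⟩
    · exact Or.inr ⟨if_neg h, lt_of_le_of_ne (not_lt.1 h) ht₀ne⟩
  set τ : ℝ := ε * t₀ with hτdef
  have hτ : 0 < τ := by
    rcases hεcase with ⟨h1, h2⟩ | ⟨h1, h2⟩ <;> rw [hτdef, h1] <;> linarith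
  have hε2 : ε * ε = 1 := by
    rcases hεcase with ⟨h1, _⟩ | ⟨h1, _⟩ <;> rw [h1] <;> norm_num
  have hεabs : |ε| = 1 := by
    rcases hεcase with ⟨h1, _⟩ | ⟨h1, _⟩ <;> rw [h1] <;> norm_num
  have hετ : ε * τ = t₀ := by rw [hτdef, ← mul_assoc, hε2, one_mul]
  have hτδ : τ < δ := by
    have h := hIδ ht₀I
    rcases hεcase with ⟨h1, _⟩ | ⟨h1, _⟩ <;> rw [hτdef, h1] <;>
      [skip; skip] <;> first
      | (simp only [one_mul]; exact h.2)
      | (have := h.1; linarith)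
  have hmem : ∀ t ∈ Icc 0 τ, ε * t ∈ I := by
    intro t ht
    rcases hεcase with ⟨h1, h2⟩ | ⟨h1, h2⟩
    · have hsub : Icc (0:ℝ) t₀ ⊆ I := hIoc.out hI0 ht₀I
      apply hsub
      rw [h1, one_mul]
      refine ⟨ht.1, ?_⟩
      have := ht.2
      rw [hτdef, h1, one_mul] at this
      exact this
    · have hsub : Icc t₀ (0:ℝ) ⊆ I := hIoc.out ht₀I hI0
      apply hsub
      rw [h1]
      have h3 := ht.1
      have h4 := ht.2
      rw [hτdef, h1] at h4
      constructor <;> nlinarith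
  set η : ℝ → (Fin n → ℝ) := fun t => γ (ε * t) with hηdef
  have hηU : ∀ t ∈ Icc 0 τ, η t ∈ U := fun t ht => hγU _ (hmem t ht)
  have hη0 : η 0 = p := by
    show γ (ε * 0) = p
    rw [mul_zero, hγ0]
  have hητ : η τ = γ t₀ := by
    show γ (ε * τ) = γ t₀
    rw [hετ]
  have hηd : ∀ t ∈ Icc 0 τ, HasDerivWithinAt η (ε • V (η t)) (Icc 0 τ) t := by
    intro t ht
    have h1 : HasDerivWithinAt (fun s : ℝ => ε * s) ε (Icc 0 τ) t := by
      simpa using ((hasDerivAt_id t).const_mul ε).hasDerivWithinAt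
    have h2 : HasDerivWithinAt γ (V (γ (ε * t))) I ((fun s : ℝ => ε * s) t) :=
      hγd _ (hmem t ht)
    have hmapsto : Set.MapsTo (fun s : ℝ => ε * s) (Icc 0 τ) I := fun s hs => hmem s hs
    have h3 := h2.scomp t h1 hmapsto
    exact h3
  -- stay in L
  have hesc : ∀ t ∈ Icc 0 τ, dist (η t) p ≤ r/2 := by
    refine flowbox_escape η (fun t => ε • V (η t)) p τ (r/2) CV hτ (by linarith) hCV0 hη0 hηd ?_ ?_
    · intro t ht hdist
      have hηL : η t ∈ L := mem_cthickening_of_dist_le (η t) p _ K hpK hdist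
      rw [norm_smul, Real.norm_eq_abs, hεabs, one_mul]
      exact hCV _ hηL
    · -- CV * τ < r/2
      have h1 : δ * (CV + 1) ≤ r/2 := by
        rw [le_div_iff₀ (by positivity)] at hδ1
        linarith
      nlinarith
  have hηL : ∀ t ∈ Icc 0 τ, η t ∈ L :=
    fun t ht => mem_cthickening_of_dist_le (η t) p _ K hpK (hesc t ht)
  -- the ODE system along the curve
  set P : ℝ → Fin k → ℝ := fun t i => f i (η t) with hPdef
  set Q : ℝ → Fin k → ℝ := fun t i => ε * fderiv ℝ (f i) (η t) (V (η t)) with hQdef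
  set Θ : ℝ → Fin k → ℝ := fun t i =>
    (∑ j, a i j (η t) * f j (η t)) + ∑ j, b i j (η t) * fderiv ℝ (f j) (η t) (V (η t))
    with hΘdef
  have hPd : ∀ t ∈ Icc 0 τ, HasDerivWithinAt P (Q t) (Icc 0 τ) t := by
    intro t ht
    rw [hasDerivWithinAt_pi]
    intro i
    have hF : HasFDerivAt (f i) (fderiv ℝ (f i) (η t)) (η t) :=
      ((hf i _ (hηU t ht)).differentiableAt).hasFDerivAt
    have h1 := hF.comp_hasDerivWithinAt t (hηd t ht)
    have h2 : fderiv ℝ (f i) (η t) (ε • V (η t)) = Q t i := by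
      rw [map_smul, smul_eq_mul]
    rw [h2] at h1
    exact h1
  have hQd : ∀ t ∈ Icc 0 τ, HasDerivWithinAt Q (Θ t) (Icc 0 τ) t := by
    intro t ht
    rw [hasDerivWithinAt_pi]
    intro i
    have hgd : DifferentiableAt ℝ (fun y => fderiv ℝ (f i) y (V y)) (η t) :=
      hgdiff i _ (hηU t ht)
    have h1 := hgd.hasFDerivAt.comp_hasDerivWithinAt t (hηd t ht)
    have h2 := h1.const_mul ε
    have h3 : ε * (fderiv ℝ (fun y => fderiv ℝ (f i) y (V y)) (η t) (ε • V (η t)))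
        = Θ t i := by
      rw [map_smul, smul_eq_mul, ← mul_assoc, hε2, one_mul]
      rw [hab i (η t) (hηU t ht)]
    rw [h3] at h2
    exact h2
  have hΘb : ∀ t ∈ Icc 0 τ, ‖Θ t‖ ≤ C₀ * (‖P t‖ + ‖Q t‖) := by
    intro t ht
    rw [pi_norm_le_iff_of_nonneg (by positivity)]
    intro i
    have hL' := hηL t ht
    have h1 : |∑ j, a i j (η t) * f j (η t)| ≤ C₀ * ‖P t‖ := by
      calc |∑ j, a i j (η t) * f j (η t)| ≤ ∑ j, |a i j (η t) * f j (η t)| :=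
            Finset.abs_sum_le_sum_abs _ _
      _ ≤ ∑ j, |a i j (η t)| * ‖P t‖ := by
            refine Finset.sum_le_sum fun j _ => ?_
            rw [abs_mul]
            refine mul_le_mul_of_nonneg_left ?_ (abs_nonneg _)
            have h := norm_le_pi_norm (P t) j
            simpa [hPdef, Real.norm_eq_abs] using h
      _ = (∑ j, |a i j (η t)|) * ‖P t‖ := by rw [Finset.sum_mul]
      _ ≤ C₀ * ‖P t‖ := mul_le_mul_of_nonneg_right (haL _ hL' i) (norm_nonneg _)
    have h2 : |∑ j, b i j (η t) * fderiv ℝ (f j) (η t) (V (η t))| ≤ C₀ * ‖Q t‖ := by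
      calc |∑ j, b i j (η t) * fderiv ℝ (f j) (η t) (V (η t))|
            ≤ ∑ j, |b i j (η t) * fderiv ℝ (f j) (η t) (V (η t))| :=
            Finset.abs_sum_le_sum_abs _ _
      _ ≤ ∑ j, |b i j (η t)| * ‖Q t‖ := by
            refine Finset.sum_le_sum fun j _ => ?_
            rw [abs_mul]
            refine mul_le_mul_of_nonneg_left ?_ (abs_nonneg _)
            have h := norm_le_pi_norm (Q t) j
            rw [hQdef] at h
            simp only [Real.norm_eq_abs, abs_mul, hεabs, one_mul] at h
            exact h
      _ = (∑ j, |b i j (η t)|) * ‖Q t‖ := by rw [Finset.sum_mul]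
      _ ≤ C₀ * ‖Q t‖ := mul_le_mul_of_nonneg_right (hbL _ hL' i) (norm_nonneg _)
    calc ‖Θ t i‖ = |(∑ j, a i j (η t) * f j (η t))
          + ∑ j, b i j (η t) * fderiv ℝ (f j) (η t) (V (η t))| := by
          rw [hΘdef, Real.norm_eq_abs]
    _ ≤ |∑ j, a i j (η t) * f j (η t)|
          + |∑ j, b i j (η t) * fderiv ℝ (f j) (η t) (V (η t))| := abs_add_le _ _
    _ ≤ C₀ * ‖P t‖ + C₀ * ‖Q t‖ := add_le_add h1 h2
    _ = C₀ * (‖P t‖ + ‖Q t‖) := (mul_add _ _ _).symm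
  have hsmall2 : 2 * C₀ * (τ + 1) * τ < 1 := by
    have h1 : δ * (4 * C₀ + 2) ≤ 1 := by
      rw [le_div_iff₀ (by positivity)] at hδ3
      linarith
    have e1 : τ + 1 ≤ 2 := by linarith
    nlinarith [mul_nonneg hC₀0 hτ.le, mul_nonneg hC₀0 hδ0.le]
  have hP0 : P 0 = 0 := funext fun i => by simp [hPdef, hη0, hfp i]
  have hPτ : P τ = 0 := funext fun i => by simp [hPdef, hητ, hft₀ i]
  have hQ0 := flowbox_core P Q Θ τ C₀ hτ hC₀0 hPd hQd hΘb hP0 hPτ hsmall2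
  have hεne : ε ≠ 0 := by
    intro h
    rw [h] at hεabs
    norm_num at hεabs
  have hg0 : ∀ i, fderiv ℝ (f i) p (V p) = 0 := by
    intro i
    have h := congrFun hQ0 i
    rw [hQdef] at h
    simp only [hη0, Pi.zero_apply] at h
    exact (mul_eq_zero.1 h).resolve_left hεne
  -- contradiction with geometric quasi-transversality
  obtain ⟨W, g₀, hWo, hpW, hWU, hg₀a, hg₀v, hg₀d⟩ := hgqt p hpX hVp
  obtain ⟨W', c, hW'o, hpW', hW'W, hca, hceq⟩ :=
    hgen p hpX W hWo hpW hWU g₀ hg₀a (fun x hx => hg₀v hx)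
  have hEq : g₀ =ᶠ[nhds p] fun x => ∑ i, c i x * f i x :=
    Filter.eventuallyEq_of_mem (hW'o.mem_nhds hpW') hceq
  have hsum : HasFDerivAt (fun x => ∑ i, c i x * f i x)
      (∑ i, (c i p • fderiv ℝ (f i) p + f i p • fderiv ℝ (c i) p)) p := by
    apply HasFDerivAt.fun_sum
    intro i _
    exact ((hca i p hpW').differentiableAt.hasFDerivAt).mul
      ((hf i p hpU).differentiableAt.hasFDerivAt)
  have hfd : fderiv ℝ g₀ p
      = ∑ i, (c i p • fderiv ℝ (f i) p + f i p • fderiv ℝ (c i) p) := by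
    rw [hEq.fderiv_eq, hsum.fderiv]
  apply hg₀d
  rw [hfd]
  simp [ContinuousLinearMap.sum_apply, ContinuousLinearMap.add_apply,
    ContinuousLinearMap.smul_apply, hfp, hg0, smul_eq_mul]
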